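/- If a sequence τ : ℤ → F with all terms nonzero satisfies the Somos-4 recurrence τ(n+4)τ(n) = α·τ(n+3)τ(n+1) + β·τ(n+2)², then u(n) = τ(n-1)τ(n+1)/τ(n)² satisfies u(n+2)·u(n)·u(n+1)² = α·u(n+1) + β for all n. -/

import Mathlib

/-- A Somos-4 sequence yields a solution of the Somos-4 QRT recurrence. -/
theorem somos4_reduction {F : Type*} [Field F] (α β : F) (τ : ℤ → F)
    (hτ : ∀ n : ℤ, τ n ≠ 0)
    (hrec : ∀ n : ℤ, τ (n + 4) * τ n = α * (τ (n + 3) * τ (n + 1)) + β * (τ (n + 2)) ^ 2)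
    (u : ℤ → F) (hu : ∀ n : ℤ, u n = τ (n - 1) * τ (n + 1) / (τ n) ^ 2) :
    ∀ n : ℤ, u (n + 2) * u n * (u (n + 1)) ^ 2 = α * u (n + 1) + β := by
  intro n
  have h := hrec (n - 1)
  rw [hu, hu, hu]
  have e1 : n + 2 - 1 = n + 1 := by ring
  have e2 : n + 1 - 1 = n := by ring
  have e3 : n + 1 + 1 = n + 2 := by ring
  have e4 : n - 1 + 4 = n + 3 := by ring
  have e5 : n - 1 + 3 = n + 2 := by ring
  have e6 : n - 1 + 1 = n := by ring
  have e7 : n - 1 + 2 = n + 1 := by ring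
  have e8 : n + 2 + 1 = n + 3 := by ring
  rw [e1, e2, e3, e8]
  rw [e4, e5, e6, e7] at h
  field_simp [hτ]
  linear_combination h
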